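/- arXiv:1205.2295 — 3 statements merged into one kernel-verified Lean document; each statement's English description precedes it below -/
import Mathlib

section
/- Let b > 0, T > 0, x, m, r ∈ ℝ, and set λ0 = (1/b)·e^{(x−m)/b}. Then ∫_0^T e^{−rs}·exp(b·λ0·(1 − e^{s/b})) ds = ( b·Γ(−rb, e^{(x−m)/b}) − b·Γ(−rb, e^{(x−m+T)/b}) ) / exp( (m−x)·r − e^{(x−m)/b} ), where Γ(a, z) = ∫_z^∞ t^{a−1}·e^{−t} dt denotes the upper incomplete gamma function (for z > 0 this integral converges for every real a). -/
open Real MeasureTheory Set intervalIntegral Filter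

/-- The upper incomplete gamma function Γ(a, z) = ∫_z^∞ t^{a−1}·e^{−t} dt. -/
noncomputable def upperIncompleteGamma (a z : ℝ) : ℝ :=
  ∫ t in Set.Ioi z, t ^ (a - 1) * Real.exp (-t)

lemma uig_integrableOn (a : ℝ) {z : ℝ} (hz : 0 < z) :
    IntegrableOn (fun t : ℝ => t ^ (a - 1) * Real.exp (-t)) (Set.Ioi z) := by
  apply integrable_of_isBigO_exp_neg (b := 1/2) (by norm_num)
  · exact (continuousOn_id.rpow_const fun t ht =>
      Or.inl (hz.trans_le ht).ne').mul
      (Real.continuous_exp.comp continuous_neg).continuousOn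
  · have h1 : Filter.Tendsto (fun t : ℝ => t ^ (a - 1) * Real.exp (-(1/2) * t))
        Filter.atTop (nhds 0) :=
      tendsto_rpow_mul_exp_neg_mul_atTop_nhds_zero (a - 1) (1/2) (by norm_num)
    have h2 : (fun t : ℝ => t ^ (a - 1) * Real.exp (-(1/2) * t))
        =O[Filter.atTop] (fun _ => (1:ℝ)) := h1.isBigO_one ℝ
    have h3 := h2.mul (Asymptotics.isBigO_refl (fun t : ℝ => Real.exp (-(1/2) * t))
      Filter.atTop)
    refine h3.congr (fun t => ?_) (fun t => one_mul _)
    rw [mul_assoc, ← Real.exp_add]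
    ring_nf

lemma uig_sub (a : ℝ) {z w : ℝ} (hz : 0 < z) (hzw : z ≤ w) :
    upperIncompleteGamma a z - upperIncompleteGamma a w
      = ∫ t in z..w, t ^ (a - 1) * Real.exp (-t) := by
  have hw : 0 < w := hz.trans_le hzw
  have h1 := uig_integrableOn a hz
  have hsplit : Set.Ioi z = Set.Ioc z w ∪ Set.Ioi w := (Set.Ioc_union_Ioi_eq_Ioi hzw).symm
  have hdisj : Disjoint (Set.Ioc z w) (Set.Ioi w) := by
    rw [Set.disjoint_left]
    intro t ht ht'
    exact absurd ht' (not_lt.mpr ht.2)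
  rw [upperIncompleteGamma, upperIncompleteGamma, intervalIntegral.integral_of_le hzw,
    hsplit, MeasureTheory.setIntegral_union hdisj measurableSet_Ioi
      ((hsplit ▸ h1).mono_set Set.subset_union_left) (uig_integrableOn a hw)]
  ring

/-- Closed form for the Gompertz present value (annuity) integral:
∫_0^T e^{−rs}·exp(b·λ0·(1 − e^{s/b})) ds
  = (b·Γ(−rb, e^{(x−m)/b}) − b·Γ(−rb, e^{(x−m+T)/b})) / exp((m−x)·r − e^{(x−m)/b}),
where λ0 = (1/b)·e^{(x−m)/b}. -/
theorem gompertz_present_value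
    (b T x m r : ℝ) (hb : 0 < b) (hT : 0 < T)
    (lam0 : ℝ) (hlam0 : lam0 = (1 / b) * Real.exp ((x - m) / b)) :
    (∫ s in (0:ℝ)..T, Real.exp (-(r * s)) * Real.exp (b * lam0 * (1 - Real.exp (s / b))))
      = (b * upperIncompleteGamma (-(r * b)) (Real.exp ((x - m) / b))
          - b * upperIncompleteGamma (-(r * b)) (Real.exp ((x - m + T) / b)))
        / Real.exp ((m - x) * r - Real.exp ((x - m) / b)) := by
  set c := Real.exp ((x - m) / b) with hc_def
  have hc : 0 < c := Real.exp_pos _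
  have hb' : b ≠ 0 := hb.ne'
  have hblam : b * lam0 = c := by rw [hlam0]; field_simp
  set f : ℝ → ℝ := fun s => c * Real.exp (s / b) with hf_def
  set f' : ℝ → ℝ := fun s => c * (Real.exp (s / b) * (1 / b)) with hf'_def
  set K : ℝ := b * Real.exp c * c ^ (r * b) with hK_def
  set g : ℝ → ℝ := fun t => K * (t ^ (-(r * b) - 1) * Real.exp (-t)) with hg_def
  -- derivative
  have hderiv : ∀ s ∈ Set.uIcc (0:ℝ) T, HasDerivAt f (f' s) s := by
    intro s _
    exact (((hasDerivAt_id s).div_const b).exp).const_mul c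
  have hcont' : ContinuousOn f' (Set.uIcc (0:ℝ) T) := by
    apply Continuous.continuousOn
    fun_prop
  have himg : f '' Set.uIcc (0:ℝ) T ⊆ Set.Ioi 0 := by
    rintro t ⟨s, _, rfl⟩
    exact mul_pos hc (Real.exp_pos _)
  have hgcont : ContinuousOn g (f '' Set.uIcc (0:ℝ) T) := by
    refine ContinuousOn.mono ?_ himg
    refine ContinuousOn.mul continuousOn_const ?_
    exact (continuousOn_id.rpow_const fun t ht => Or.inl (ne_of_gt ht)).mul
      (Real.continuous_exp.comp continuous_neg).continuousOn
  have key : (∫ s in (0:ℝ)..T, f' s • g (f s)) = ∫ t in (f 0)..(f T), g t :=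
    intervalIntegral.integral_comp_smul_deriv' hderiv hcont' hgcont
  -- pointwise identity for the integrand
  have hpt : ∀ s : ℝ,
      Real.exp (-(r * s)) * Real.exp (b * lam0 * (1 - Real.exp (s / b))) = f' s • g (f s) := by
    intro s
    have hE : (0:ℝ) < Real.exp (s / b) := Real.exp_pos _
    have hu : (0:ℝ) < c * Real.exp (s / b) := mul_pos hc hE
    have h1 : (c * Real.exp (s / b)) ^ (-(r * b) - 1)
        = c ^ (-(r * b)) * Real.exp (-(r * s)) / (c * Real.exp (s / b)) := by
      have harg : s / b * -(r * b) = -(r * s) := by field_simp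
      rw [Real.rpow_sub hu, Real.rpow_one, Real.mul_rpow hc.le hE.le, ← Real.exp_mul (s / b) (-(r * b)), harg]
    have h2 : c ^ (r * b) * c ^ (-(r * b)) = 1 := by
      rw [← Real.rpow_add hc]; simp
    have h3 : Real.exp (b * lam0 * (1 - Real.exp (s / b)))
        = Real.exp c * Real.exp (-(c * Real.exp (s / b))) := by
      rw [hblam, ← Real.exp_add]
      ring_nf
    rw [h3]
    show _ = (c * (Real.exp (s / b) * (1 / b)))
      * (K * ((c * Real.exp (s / b)) ^ (-(r * b) - 1)
          * Real.exp (-(c * Real.exp (s / b)))))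
    rw [h1, hK_def]
    field_simp
    linear_combination (-1 : ℝ) * h2
  -- rewrite the endpoints
  have hf0 : f 0 = c := by simp [hf_def]
  have hfT : f T = c * Real.exp (T / b) := rfl
  have hw_eq : Real.exp ((x - m + T) / b) = c * Real.exp (T / b) := by
    rw [hc_def, ← Real.exp_add]
    congr 1
    field_simp
  have hle : c ≤ c * Real.exp (T / b) := by
    nlinarith [Real.one_le_exp (le_of_lt (div_pos hT hb)), hc]
  have hsub := uig_sub (-(r * b)) hc hle
  have hconst : (∫ t in (f 0)..(f T), g t)
      = K * (upperIncompleteGamma (-(r * b)) c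
          - upperIncompleteGamma (-(r * b)) (c * Real.exp (T / b))) := by
    rw [hf0, hfT]
    simp only [hg_def]
    rw [intervalIntegral.integral_const_mul, hsub]
  have hLHS : (∫ s in (0:ℝ)..T,
      Real.exp (-(r * s)) * Real.exp (b * lam0 * (1 - Real.exp (s / b))))
      = K * (upperIncompleteGamma (-(r * b)) c
          - upperIncompleteGamma (-(r * b)) (c * Real.exp (T / b))) := by
    rw [← hconst, ← key]
    exact intervalIntegral.integral_congr fun s _ => hpt s
  rw [hLHS, hw_eq]
  -- final algebra
  have hcrb : c ^ (r * b) = Real.exp ((x - m) * r) := by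
    rw [hc_def, ← Real.exp_mul]
    congr 1
    field_simp
  have hD : Real.exp ((m - x) * r - c) ≠ 0 := Real.exp_ne_zero _
  rw [eq_div_iff hD]
  have hK1 : Real.exp c * c ^ (r * b) * Real.exp ((m - x) * r - c) = 1 := by
    rw [hcrb, ← Real.exp_add, ← Real.exp_add, Real.exp_eq_one_iff]
    ring
  set G1 := upperIncompleteGamma (-(r * b)) c
  set G2 := upperIncompleteGamma (-(r * b)) (c * Real.exp (T / b))
  rw [hK_def]
  linear_combination b * (G1 - G2) * hK1
end

section
/- Let r ∈ ℝ, γ > 0, D > 0, F0 ∈ ℝ, c0 ∈ ℝ, and let p : [0, D] → (0, ∞) be continuous. Suppose F : [0, D] → ℝ is differentiable with F(0) = F0, F(D) = 0, and F'(t) = r·F(t) − c0·p(t)^{1/γ} for all t ∈ [0, D]. Then c0 = F0 / ∫_0^D e^{−rs}·p(s)^{1/γ} ds; that is, the initial withdrawal rate is c0/F0 = 1/∫_0^D e^{−rs}·p(s)^{1/γ} ds. -/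
/-- If wealth satisfies F(0) = F0, F(D) = 0 and
F'(t) = r·F(t) − c0·p(t)^{1/γ} on [0, D], then the initial consumption is
c0 = F0 / ∫_0^D e^{−rs}·p(s)^{1/γ} ds (the Initial Withdrawal Rate formula). -/
theorem initial_withdrawal_rate
    (r γ D F0 c0 : ℝ) (hγ : 0 < γ) (hD : 0 < D)
    (p : ℝ → ℝ) (hp : ContinuousOn p (Set.Icc 0 D))
    (hppos : ∀ t ∈ Set.Icc (0:ℝ) D, 0 < p t)
    (F : ℝ → ℝ) (hF0 : F 0 = F0) (hFD : F D = 0)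
    (hode : ∀ t ∈ Set.Icc (0:ℝ) D, HasDerivAt F (r * F t - c0 * p t ^ (1 / γ)) t) :
    c0 = F0 / ∫ s in (0:ℝ)..D, Real.exp (-(r * s)) * p s ^ (1 / γ) := by
  set f : ℝ → ℝ := fun s => Real.exp (-(r * s)) * p s ^ (1 / γ) with hf
  have hcont : ContinuousOn f (Set.Icc 0 D) := by
    apply ContinuousOn.mul
    · exact (Real.continuous_exp.comp (continuous_const.mul continuous_id).neg).continuousOn
    · exact hp.rpow_const (fun t ht => Or.inr (by positivity))
  have hfpos : ∀ t ∈ Set.Icc (0:ℝ) D, 0 < f t := fun t ht => by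
    have := hppos t ht
    have : (0:ℝ) < p t ^ (1 / γ) := Real.rpow_pos_of_pos this _
    positivity
  -- derivative of g t = exp(-(r*t)) * F t
  have hg : ∀ t ∈ Set.uIcc (0:ℝ) D,
      HasDerivAt (fun s => Real.exp (-(r * s)) * F s) (-c0 * f t) t := by
    intro t ht
    rw [Set.uIcc_of_le hD.le] at ht
    have h1 : HasDerivAt (fun s => Real.exp (-(r * s))) (-r * Real.exp (-(r * t))) t := by
      have : HasDerivAt (fun s : ℝ => -(r * s)) (-r) t := by
        simpa [Pi.neg_def] using ((hasDerivAt_id' t).const_mul r).neg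
      simpa [mul_comm, Function.comp_def] using (Real.hasDerivAt_exp (-(r * t))).comp t this
    have := h1.mul (hode t ht)
    convert this using 1
    all_goals first | rfl | ring
  have hint : IntervalIntegrable (fun t => -c0 * f t) MeasureTheory.volume 0 D :=
    ((hcont.const_smul (-c0)).mono (by rw [Set.uIcc_of_le hD.le])).intervalIntegrable
  have key := intervalIntegral.integral_eq_sub_of_hasDerivAt hg hint
  rw [hFD, hF0] at key
  simp only [mul_zero, neg_zero, Real.exp_zero, one_mul, zero_sub] at key
  rw [intervalIntegral.integral_const_mul] at key
  have hfint : IntervalIntegrable f MeasureTheory.volume 0 D :=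
    (hcont.mono (by rw [Set.uIcc_of_le hD.le])).intervalIntegrable
  have hIpos : 0 < ∫ s in (0:ℝ)..D, f s :=
    intervalIntegral.intervalIntegral_pos_of_pos_on hfint
      (fun x hx => hfpos x ⟨hx.1.le, hx.2.le⟩) hD
  field_simp
  linarith [key]
end

section
/- Let r ∈ ℝ, T > 0, F0 > 0, and let p : [0, T] → (0, ∞) be continuous. Define c*(s) = p(s)·F0 / ∫_0^T e^{−rq}·p(q) dq. Then c* satisfies the budget constraint ∫_0^T e^{−rs}·c*(s) ds = F0, and for every measurable c : [0, T] → (0, ∞) with ∫_0^T e^{−rs}·c(s) ds ≤ F0 and s ↦ e^{−rs}·p(s)·ln c(s) integrable, one has ∫_0^T e^{−rs}·p(s)·ln c(s) ds ≤ ∫_0^T e^{−rs}·p(s)·ln c*(s) ds. -/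
open MeasureTheory

/-- With logarithmic utility, the plan
c*(s) = p(s)·F0 / ∫_0^T e^{−rq}·p(q) dq exhausts the budget
(∫_0^T e^{−rs}·c*(s) ds = F0) and maximizes ∫_0^T e^{−rs}·p(s)·ln c(s) ds over all
measurable positive plans c with discounted cost at most F0 and integrable objective. -/
theorem log_optimal_consumption
    (r T F0 : ℝ) (hT : 0 < T) (hF0 : 0 < F0)
    (p : ℝ → ℝ) (hp : ContinuousOn p (Set.Icc 0 T))
    (hppos : ∀ s ∈ Set.Icc (0:ℝ) T, 0 < p s)
    (cstar : ℝ → ℝ)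
    (hcstar : ∀ s, cstar s = p s * F0 / ∫ q in (0:ℝ)..T, Real.exp (-(r * q)) * p q) :
    (∫ s in (0:ℝ)..T, Real.exp (-(r * s)) * cstar s) = F0 ∧
    ∀ c : ℝ → ℝ, Measurable c → (∀ s, 0 < c s) →
      IntervalIntegrable (fun s => Real.exp (-(r * s)) * c s) volume 0 T →
      (∫ s in (0:ℝ)..T, Real.exp (-(r * s)) * c s) ≤ F0 →
      IntervalIntegrable (fun s => Real.exp (-(r * s)) * p s * Real.log (c s)) volume 0 T →
      (∫ s in (0:ℝ)..T, Real.exp (-(r * s)) * p s * Real.log (c s))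
        ≤ ∫ s in (0:ℝ)..T, Real.exp (-(r * s)) * p s * Real.log (cstar s) := by
  have hT' : (0:ℝ) ≤ T := hT.le
  set I : ℝ := ∫ q in (0:ℝ)..T, Real.exp (-(r * q)) * p q with hI
  have hcontI : ContinuousOn (fun q => Real.exp (-(r * q)) * p q) (Set.Icc 0 T) :=
    (Continuous.continuousOn (by continuity)).mul hp
  have hintI : IntervalIntegrable (fun q => Real.exp (-(r * q)) * p q) volume 0 T := by
    apply ContinuousOn.intervalIntegrable
    rwa [Set.uIcc_of_le hT']
  have hIpos : 0 < I := by
    rw [hI]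
    apply intervalIntegral.intervalIntegral_pos_of_pos_on hintI _ hT
    intro x hx
    exact mul_pos (Real.exp_pos _) (hppos x ⟨hx.1.le, hx.2.le⟩)
  have hIne : I ≠ 0 := hIpos.ne'
  have hF0ne : F0 ≠ 0 := hF0.ne'
  have hcspos : ∀ s ∈ Set.Icc (0:ℝ) T, 0 < cstar s := by
    intro s hs
    rw [hcstar]
    exact div_pos (mul_pos (hppos s hs) hF0) hIpos
  constructor
  · have heq : (fun s => Real.exp (-(r * s)) * cstar s)
        = fun s => (F0 / I) * (Real.exp (-(r * s)) * p s) := by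
      funext s
      rw [hcstar s]
      field_simp
    rw [heq, intervalIntegral.integral_const_mul, ← hI]
    field_simp
  · intro c hc hcpos hci hbudget hobj
    have hcontstar : ContinuousOn
        (fun s => Real.exp (-(r*s)) * p s * Real.log (cstar s)) (Set.Icc 0 T) := by
      apply ContinuousOn.mul hcontI
      apply ContinuousOn.log
      · have h1 : ContinuousOn (fun s => p s * F0 / I) (Set.Icc 0 T) :=
          (hp.mul continuousOn_const).div_const _
        exact h1.congr (fun s hs => hcstar s)
      · intro s hs; exact (hcspos s hs).ne'
    have hintstar : IntervalIntegrable
        (fun s => Real.exp (-(r*s)) * p s * Real.log (cstar s)) volume 0 T := by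
      apply ContinuousOn.intervalIntegrable
      rwa [Set.uIcc_of_le hT']
    have hintg : IntervalIntegrable
        (fun s => (I/F0) * (Real.exp (-(r*s)) * c s) - Real.exp (-(r*s)) * p s) volume 0 T :=
      (hci.const_mul _).sub hintI
    have hpt : ∀ s ∈ Set.Icc (0:ℝ) T,
        Real.exp (-(r*s)) * p s * Real.log (c s) - Real.exp (-(r*s)) * p s * Real.log (cstar s)
        ≤ (I/F0) * (Real.exp (-(r*s)) * c s) - Real.exp (-(r*s)) * p s := by
      intro s hs
      have hps := hppos s hs
      have hcs := hcspos s hs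
      have hpsne : p s ≠ 0 := hps.ne'
      have hlog : Real.log (c s) - Real.log (cstar s) ≤ c s / cstar s - 1 := by
        rw [← Real.log_div (hcpos s).ne' hcs.ne']
        exact Real.log_le_sub_one_of_pos (div_pos (hcpos s) hcs)
      have key : Real.exp (-(r*s)) * p s * (Real.log (c s) - Real.log (cstar s))
          ≤ Real.exp (-(r*s)) * p s * (c s / cstar s - 1) := by
        apply mul_le_mul_of_nonneg_left hlog
        positivity
      have hrhs : Real.exp (-(r*s)) * p s * (c s / cstar s - 1)
          = (I/F0) * (Real.exp (-(r*s)) * c s) - Real.exp (-(r*s)) * p s := by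
        rw [hcstar s]
        field_simp
      rw [hrhs, mul_sub] at key
      exact key
    have hmono : (∫ s in (0:ℝ)..T,
          (Real.exp (-(r*s)) * p s * Real.log (c s)
            - Real.exp (-(r*s)) * p s * Real.log (cstar s)))
        ≤ ∫ s in (0:ℝ)..T,
            ((I/F0) * (Real.exp (-(r*s)) * c s) - Real.exp (-(r*s)) * p s) :=
      intervalIntegral.integral_mono_on hT' (hobj.sub hintstar) hintg hpt
    rw [intervalIntegral.integral_sub hobj hintstar,
        intervalIntegral.integral_sub (hci.const_mul _) hintI,
        intervalIntegral.integral_const_mul, ← hI] at hmono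
    have hb : (I/F0) * (∫ s in (0:ℝ)..T, Real.exp (-(r*s)) * c s) ≤ (I/F0) * F0 := by
      apply mul_le_mul_of_nonneg_left hbudget
      positivity
    have hIF : (I/F0) * F0 = I := by field_simp
    linarith
end
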